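/- Spikiness bound for Brown double exponential smoothing weights: For the normalized weights w_i^{(t)}(θ) = b_{t-i}(θ) / Σ_{j=0}^{t-1} b_j(θ) with b_k(θ) = (2-θ(k+1))(1-θ)^k, the ratio ||w^{(t)}(θ)||_∞ / ||w^{(t)}(θ)||_2^2 = (Σ_k b_k(θ)) · max_k |b_k(θ)| / Σ_k b_k(θ)^2 is at most 18 e^2 uniformly over θ ∈ (0,1) and t ≥ 1. -/

import Mathlib

set_option maxHeartbeats 2000000 in
open Finset in
/-- Spikiness bound for Brown double exponential smoothing weights: for the normalized
weights `w_i^{(t)}(θ) = b_{t-i}(θ) / ∑_{j=0}^{t-1} b_j(θ)` with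
`b_k(θ) = (2-θ(k+1))(1-θ)^k`, the ratio `‖w‖_∞ / ‖w‖_2²`, which equals
`(∑_k b_k) · max_k |b_k| / ∑_k b_k²`, is at most `18 e²` for all `θ ∈ (0,1)`, `t ≥ 1`. -/
theorem stmt_14 (t : ℕ) (ht : 1 ≤ t) (θ : ℝ) (hθ0 : 0 < θ) (hθ1 : θ < 1)
    (b : ℕ → ℝ) (hb : ∀ k, b k = (2 - θ * (k + 1)) * (1 - θ) ^ k)
    (w : ℕ → ℝ) (hw : ∀ i, w i = b (t - i) / ∑ j ∈ range t, b j)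
    (hne : (Icc 1 t).Nonempty) (hne' : (range t).Nonempty) :
    ((Icc 1 t).sup' hne (fun i => |w i|)) / (∑ i ∈ Icc 1 t, (w i) ^ 2)
        = (∑ k ∈ range t, b k) * ((range t).sup' hne' (fun k => |b k|))
            / (∑ k ∈ range t, (b k) ^ 2)
    ∧ ((Icc 1 t).sup' hne (fun i => |w i|)) / (∑ i ∈ Icc 1 t, (w i) ^ 2)
        ≤ 18 * Real.exp 1 ^ 2 := by
  have h1θ : (0:ℝ) < 1 - θ := by linarith
  -- Bernoulli-type bound: θ (k+1) (1-θ)^k ≤ 1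
  have hBern : ∀ k : ℕ, θ * (k + 1) * (1 - θ) ^ k ≤ 1 := by
    intro k
    have hd : (0:ℝ) ≤ θ / (1 - θ) := by positivity
    have h1 : 1 + (k:ℝ) * (θ / (1 - θ)) ≤ (1 + θ / (1 - θ)) ^ k :=
      one_add_mul_le_pow (by linarith) k
    have he : 1 + θ / (1 - θ) = (1 - θ)⁻¹ := by field_simp; ring
    rw [he] at h1
    have hp : (0:ℝ) < (1 - θ) ^ k := by positivity
    have h2 : θ * (k + 1) ≤ ((1 - θ) ^ k)⁻¹ := by
      rw [← inv_pow]
      have : (k:ℝ) * θ ≤ (k:ℝ) * (θ / (1 - θ)) := by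
        apply mul_le_mul_of_nonneg_left _ (Nat.cast_nonneg k)
        rw [le_div_iff₀ h1θ]; nlinarith
      nlinarith
    calc θ * (k + 1) * (1 - θ) ^ k ≤ ((1 - θ) ^ k)⁻¹ * (1 - θ) ^ k :=
          mul_le_mul_of_nonneg_right h2 hp.le
      _ = 1 := inv_mul_cancel₀ hp.ne'
  -- b k ≤ 2 and |b k| ≤ 2
  have hb_le : ∀ k : ℕ, b k ≤ 2 := by
    intro k
    rw [hb]
    have hp : (0:ℝ) ≤ (1 - θ) ^ k := by positivity
    have hp1 : (1 - θ) ^ k ≤ 1 := pow_le_one₀ h1θ.le (by linarith)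
    rcases le_or_gt (θ * (k + 1)) 2 with h | h
    · nlinarith
    · nlinarith
  have habs_le : ∀ k : ℕ, |b k| ≤ 2 := by
    intro k
    rw [abs_le]
    have hp : (0:ℝ) ≤ (1 - θ) ^ k := by positivity
    refine ⟨?_, hb_le k⟩
    rw [hb]
    nlinarith [hBern k]
  set S := ∑ k ∈ range t, b k with hSdef
  set Q := ∑ k ∈ range t, b k ^ 2 with hQdef
  set M := (range t).sup' hne' (fun k => |b k|) with hMdef
  clear_value S Q M
  have ht0 : 0 ∈ range t := by simp [Finset.mem_range]; omega
  -- closed form for S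
  have hS_closed : S = 1 / θ - (1 / θ - t) * (1 - θ) ^ t := by
    have key : ∀ k : ℕ, b k = (fun k : ℕ => (1 / θ - k) * (1 - θ) ^ k) k
        - (fun k : ℕ => (1 / θ - k) * (1 - θ) ^ k) (k + 1) := by
      intro k
      simp only [hb]
      push_cast
      rw [pow_succ]
      field_simp
      ring
    rw [hSdef, Finset.sum_congr rfl (fun k _ => key k), Finset.sum_range_sub']
    simp
  have hSpos : 0 < S := by
    rw [hS_closed]
    have hp : (0:ℝ) < (1 - θ) ^ t := by positivity
    rcases le_or_gt (1 / θ) t with h | h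
    · nlinarith [one_div_pos.mpr hθ0,
        mul_nonpos_of_nonpos_of_nonneg (by linarith : 1 / θ - (t:ℝ) ≤ 0) hp.le]
    · have hp1 : (1 - θ) ^ t < 1 := pow_lt_one₀ h1θ.le (by linarith) (by omega)
      nlinarith
  have hS_le_inv : S ≤ 2 / θ := by
    rw [hS_closed]
    have hp : (0:ℝ) < (1 - θ) ^ t := by positivity
    have h1 : θ * (t + 1) * (1 - θ) ^ t ≤ 1 := hBern t
    have h2 : (t:ℝ) * (1 - θ) ^ t ≤ 1 / θ := by
      rw [le_div_iff₀ hθ0]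
      nlinarith
    have h3 : (0:ℝ) ≤ (1 / θ) * (1 - θ) ^ t := by positivity
    have h4 : 2 / θ = 1 / θ + 1 / θ := by ring
    nlinarith
  have hS_le_t : S ≤ 2 * t := by
    have h2 : S ≤ (t:ℝ) * 2 := by
      rw [hSdef]
      have := Finset.sum_le_card_nsmul (range t) b 2 (fun k _ => hb_le k)
      simpa [Finset.card_range, nsmul_eq_mul] using this
    linarith
  -- Q bounds
  have hQ0 : ∀ k ∈ Finset.range t, (0:ℝ) ≤ b k ^ 2 := fun k _ => sq_nonneg _
  have hb0 : b 0 = 2 - θ := by rw [hb]; push_cast; ring_nf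
  have hQpos : 0 < Q := by
    have h1 : b 0 ^ 2 ≤ Q := hQdef ▸ Finset.single_le_sum hQ0 ht0
    have : 0 < b 0 ^ 2 := by rw [hb0]; nlinarith
    linarith
  -- M bounds
  have hM_le : M ≤ 2 := hMdef ▸ Finset.sup'_le _ _ (fun k _ => habs_le k)
  have hM_pos : 0 < M := by
    have h1 : |b 0| ≤ M := hMdef ▸ Finset.le_sup' (fun k => |b k|) ht0
    have : 0 < |b 0| := by rw [hb0, abs_pos]; nlinarith
    linarith
  -- the identity
  have hsum_eq : ∑ i ∈ Finset.Icc 1 t, (w i) ^ 2 = Q / S ^ 2 := by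
    have h1 : ∑ i ∈ Finset.Icc 1 t, (w i) ^ 2 = ∑ k ∈ Finset.range t, (b k / S) ^ 2 := by
      apply Finset.sum_nbij' (fun i => t - i) (fun k => t - k)
      · intro a ha; simp only [Finset.mem_Icc] at ha; simp only [Finset.mem_range]; omega
      · intro a ha; simp only [Finset.mem_range] at ha; simp only [Finset.mem_Icc]; omega
      · intro a ha; simp only [Finset.mem_Icc] at ha; omega
      · intro a ha; simp only [Finset.mem_range] at ha; omega
      · intro a ha; rw [hw a]
    rw [h1, hQdef]
    simp only [div_pow]
    rw [← Finset.sum_div]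
  have hsup_eq : (Finset.Icc 1 t).sup' hne (fun i => |w i|) = M / S := by
    apply le_antisymm
    · apply Finset.sup'_le
      intro i hi
      simp only [Finset.mem_Icc] at hi
      have hmem : t - i ∈ Finset.range t := by simp only [Finset.mem_range]; omega
      rw [hw i, abs_div, abs_of_pos hSpos, hMdef]
      gcongr
      exact Finset.le_sup' (fun k => |b k|) hmem
    · obtain ⟨k₀, hk₀, hMk⟩ := Finset.exists_mem_eq_sup' hne' (fun k => |b k|)
      simp only [Finset.mem_range] at hk₀
      have hi : t - k₀ ∈ Finset.Icc 1 t := by simp only [Finset.mem_Icc]; omega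
      have harg : t - (t - k₀) = k₀ := by omega
      have hv : |w (t - k₀)| = M / S := by
        rw [hw, harg, abs_div, abs_of_pos hSpos, hMdef, hMk]
      exact hv ▸ Finset.le_sup' (fun i => |w i|) hi
  have hratio : ((Finset.Icc 1 t).sup' hne (fun i => |w i|)) / (∑ i ∈ Finset.Icc 1 t, (w i) ^ 2)
      = S * M / Q := by
    rw [hsup_eq, hsum_eq]
    field_simp
  constructor
  · rw [hratio]
  · rw [hratio]
    rw [div_le_iff₀ hQpos]
    have hE : Real.exp (-1) * Real.exp 1 = 1 := by
      rw [← Real.exp_add]; norm_num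
    have hEE : Real.exp (-1) ^ 2 * Real.exp 1 ^ 2 = 1 := by
      rw [← mul_pow, hE, one_pow]
    have hEpos : 0 < Real.exp (-1) := Real.exp_pos _
    have hE1pos : 0 < Real.exp 1 := Real.exp_pos _
    have he2 : (4:ℝ) ≤ Real.exp 1 ^ 2 := by
      have h := Real.add_one_le_exp (1:ℝ)
      nlinarith
    rcases le_or_gt (1/2 : ℝ) θ with hhalf | hhalf
    · -- θ ≥ 1/2 : Q ≥ (2-θ)² ≥ 1, S ≤ 2/θ ≤ 4, M ≤ 2
      have hq1 : (1:ℝ) ≤ Q := by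
        have h1 : b 0 ^ 2 ≤ Q := hQdef ▸ Finset.single_le_sum hQ0 ht0
        rw [hb0] at h1; nlinarith
      have hS4 : S ≤ 4 := by
        have : 2 / θ ≤ 4 := by rw [div_le_iff₀ hθ0]; linarith
        linarith
      have hsm : S * M ≤ 8 := by
        nlinarith [mul_le_mul hS4 hM_le hM_pos.le (by linarith : (0:ℝ) ≤ 4)]
      have h72 : (72:ℝ) ≤ 18 * Real.exp 1 ^ 2 * Q := by nlinarith
      linarith
    · -- θ < 1/2
      have hexpθ : Real.exp (-(2*θ)) ≤ 1 - θ := by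
        have h1 : 1 + 2*θ ≤ Real.exp (2*θ) := by
          have := Real.add_one_le_exp (2*θ); linarith
        rw [Real.exp_neg, inv_le_iff_one_le_mul₀ (Real.exp_pos _)]
        nlinarith
      have hbk_ge : ∀ k : ℕ, (k:ℝ) ≤ 1/(2*θ) → Real.exp (-1) ≤ b k := by
        intro k hk
        rw [hb]
        rw [le_div_iff₀ (by linarith : (0:ℝ) < 2*θ)] at hk
        have hk' : θ * k ≤ 1/2 := by nlinarith
        have h1 : θ * (k + 1) ≤ 1 := by nlinarith
        have h2 : Real.exp (-1) ≤ (1 - θ) ^ k := by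
          have h3 : Real.exp (-(2*θ)) ^ k ≤ (1 - θ) ^ k :=
            pow_le_pow_left₀ (Real.exp_pos _).le hexpθ k
          have h4 : Real.exp (-(2*θ)) ^ k = Real.exp (-(2*θ) * k) := by
            rw [← Real.exp_nat_mul]; ring_nf
          have h5 : Real.exp (-1) ≤ Real.exp (-(2*θ) * k) := by
            apply Real.exp_le_exp.mpr
            nlinarith
          rw [h4] at h3; linarith
        have hp : (0:ℝ) ≤ (1 - θ) ^ k := by positivity
        nlinarith [Real.exp_pos (-1)]
      set m := min t (Nat.floor (1/(2*θ)) + 1) with hm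
      clear_value m
      have hmt : m ≤ t := by rw [hm]; exact min_le_left _ _
      have hQm : (m:ℝ) * Real.exp (-1) ^ 2 ≤ Q := by
        have hsub : Finset.range m ⊆ Finset.range t := Finset.range_subset_range.mpr hmt
        have h1 : ∑ k ∈ Finset.range m, b k ^ 2 ≤ Q :=
          hQdef ▸ Finset.sum_le_sum_of_subset_of_nonneg hsub (fun k hk _ => sq_nonneg _)
        have h3 : ∀ k ∈ Finset.range m, Real.exp (-1) ^ 2 ≤ b k ^ 2 := by
          intro k hk
          simp only [Finset.mem_range] at hk
          have hkfl : k ≤ Nat.floor (1/(2*θ)) := by omega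
          have hkr : (k:ℝ) ≤ 1/(2*θ) :=
            calc (k:ℝ) ≤ (Nat.floor (1/(2*θ)) : ℝ) := by exact_mod_cast hkfl
              _ ≤ 1/(2*θ) := Nat.floor_le (by positivity)
          have := hbk_ge k hkr
          nlinarith [Real.exp_pos (-1)]
        have h2 : (m:ℝ) * Real.exp (-1) ^ 2 ≤ ∑ k ∈ Finset.range m, b k ^ 2 := by
          calc (m:ℝ) * Real.exp (-1) ^ 2 = (Finset.range m).card • (Real.exp (-1)^2) := by
                simp [nsmul_eq_mul]
            _ ≤ ∑ k ∈ Finset.range m, b k ^ 2 := Finset.card_nsmul_le_sum _ _ _ h3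
        linarith
      rcases le_or_gt (t:ℝ) (1/(2*θ)) with hcase | hcase
      · -- m = t
        have hmeq : m = t := by
          have : t ≤ Nat.floor (1/(2*θ)) := Nat.le_floor hcase
          omega
        rw [hmeq] at hQm
        have htpos : (0:ℝ) < t := by exact_mod_cast ht
        have key : S * M ≤ 4 * t := by
          nlinarith [mul_le_mul hS_le_t hM_le hM_pos.le (by positivity : (0:ℝ) ≤ 2*(t:ℝ))]
        have h6 : 18 * Real.exp 1 ^ 2 * ((t:ℝ) * Real.exp (-1) ^ 2) = 18 * t := by
          linear_combination (18 * (t:ℝ)) * hEE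
        have h9 : 18 * Real.exp 1 ^ 2 * ((t:ℝ) * Real.exp (-1) ^ 2)
            ≤ 18 * Real.exp 1 ^ 2 * Q :=
          mul_le_mul_of_nonneg_left hQm (by positivity)
        linarith [h6 ▸ h9]
      · -- 1/(2θ) < t
        have hmgt : 1/(2*θ) < (m:ℝ) := by
          have h1 : 1/(2*θ) < ((Nat.floor (1/(2*θ)) : ℝ) + 1) := Nat.lt_floor_add_one _
          have h2 : (m:ℝ) = min (t:ℝ) ((Nat.floor (1/(2*θ)) : ℝ) + 1) := by
            rw [hm]; push_cast; rfl
          rw [h2]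
          exact lt_min hcase h1
        have hQb : Real.exp (-1) ^ 2 / (2*θ) ≤ Q := by
          have h1 : Real.exp (-1) ^ 2 / (2*θ) ≤ (m:ℝ) * Real.exp (-1) ^ 2 := by
            rw [div_le_iff₀ (by linarith : (0:ℝ) < 2*θ)]
            have h2 : (1:ℝ) < m * (2*θ) := by
              rw [← div_lt_iff₀ (by linarith : (0:ℝ) < 2*θ)]; exact hmgt
            nlinarith [mul_le_mul_of_nonneg_left h2.le (sq_nonneg (Real.exp (-1)))]
          linarith
        have key : S * M ≤ 4 / θ := by
          have h := mul_le_mul hS_le_inv hM_le hM_pos.le (by positivity : (0:ℝ) ≤ 2/θ)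
          have h' : 2/θ*2 = 4/θ := by ring
          linarith
        have h7 : 18 * Real.exp 1 ^ 2 * (Real.exp (-1) ^ 2 / (2*θ)) = 9 / θ := by
          have h' : 18 * Real.exp 1 ^ 2 * (Real.exp (-1) ^ 2 / (2*θ))
              = (Real.exp (-1) ^ 2 * Real.exp 1 ^ 2) * (9 / θ) := by ring
          rw [h', hEE, one_mul]
        have h9 : 18 * Real.exp 1 ^ 2 * (Real.exp (-1)^2/(2*θ)) ≤ 18 * Real.exp 1 ^ 2 * Q :=
          mul_le_mul_of_nonneg_left hQb (by positivity)
        have h10 : (4:ℝ)/θ ≤ 9/θ := by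
          rw [div_le_div_iff₀ hθ0 hθ0]; nlinarith
        linarith [h7 ▸ h9]
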